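/- Let E be a real inner product space, f : E → ℝ convex and differentiable with L-Lipschitz gradient (L > 0), and ψ : E → ℝ convex. Set F = f + ψ and assume the set Ω of minimizers of F is nonempty, with minimum value F*. Given L̄ ≥ L, define the proximal gradient iterates x_{k+1} = x_k + d_k, where d_k is the (unique) global minimizer over d ∈ E of ⟨∇f(x_k), d⟩ + (L̄/2)‖d‖² + ψ(x_k + d). Then k·(F(x_k) − F*) → 0 as k → ∞; that is, F(x_k) − F* = o(1/k). -/

import Mathlib

open scoped RealInnerProductSpace
open Filter Finset

lemma my_conv_grad_ineq {E : Type*} [NormedAddCommGroup E] [InnerProductSpace ℝ E]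
    {f : E → ℝ} {f' : E → E}
    (hfconv : ConvexOn ℝ Set.univ f)
    (hderiv : ∀ y, HasFDerivAt f (innerSL ℝ (f' y)) y) (x y : E) :
    f x + ⟪f' x, y - x⟫ ≤ f y := by
  set φ : ℝ → ℝ := f ∘ (AffineMap.lineMap x y : ℝ →ᵃ[ℝ] E) with hφ
  have hconv : ConvexOn ℝ Set.univ φ := by
    have := hfconv.comp_affineMap (AffineMap.lineMap x y : ℝ →ᵃ[ℝ] E)
    simpa using this
  have hline : HasDerivAt (fun t : ℝ => (AffineMap.lineMap x y : ℝ →ᵃ[ℝ] E) t) (y - x) 0 := by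
    simp only [AffineMap.coe_lineMap]
    have : HasDerivAt (fun t : ℝ => t • (y - x) + x) ((1:ℝ) • (y - x)) 0 :=
      ((hasDerivAt_id (0:ℝ)).smul_const (y - x)).add_const x
    simpa using this
  have hD : HasDerivAt φ ⟪f' x, y - x⟫ 0 := by
    have := (hderiv ((AffineMap.lineMap x y : ℝ →ᵃ[ℝ] E) 0)).comp_hasDerivAt 0 hline
    simpa [hφ, Function.comp] using this
  have := hconv.le_slope_of_hasDerivAt (Set.mem_univ (0:ℝ)) (Set.mem_univ (1:ℝ)) one_pos hD
  rw [slope_def_field] at this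
  simp only [hφ, Function.comp, AffineMap.lineMap_apply_zero, AffineMap.lineMap_apply_one] at this
  linarith

lemma my_descent {E : Type*} [NormedAddCommGroup E] [InnerProductSpace ℝ E]
    {f : E → ℝ} {f' : E → E} {L : ℝ} (hL : 0 < L)
    (hderiv : ∀ y, HasFDerivAt f (innerSL ℝ (f' y)) y)
    (hlip : ∀ y z, ‖f' y - f' z‖ ≤ L * ‖y - z‖) (x v : E) :
    f (x + v) ≤ f x + ⟪f' x, v⟫ + L / 2 * ‖v‖ ^ 2 := by
  set g : ℝ → ℝ := fun t => f (x + t • v) - t * ⟪f' x, v⟫ - L / 2 * ‖v‖ ^ 2 * t ^ 2 with hg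
  have hgd : ∀ t : ℝ, HasDerivAt g (⟪f' (x + t • v), v⟫ - ⟪f' x, v⟫ - L * ‖v‖ ^ 2 * t) t := by
    intro t
    have h1 : HasDerivAt (fun t : ℝ => x + t • v) v t := by
      have : HasDerivAt (fun t : ℝ => t • v) ((1:ℝ) • v) t := (hasDerivAt_id t).smul_const v
      simpa using this.const_add x
    have h2 : HasDerivAt (fun t : ℝ => f (x + t • v)) ⟪f' (x + t • v), v⟫ t := by
      have := (hderiv (x + t • v)).comp_hasDerivAt t h1
      simpa [Function.comp_def] using this
    have h3 : HasDerivAt (fun t : ℝ => t * ⟪f' x, v⟫) ⟪f' x, v⟫ t :=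
      hasDerivAt_mul_const _
    have h4 : HasDerivAt (fun t : ℝ => L / 2 * ‖v‖ ^ 2 * t ^ 2)
        (L / 2 * ‖v‖ ^ 2 * (2 * t)) t := by
      have := (hasDerivAt_pow 2 t).const_mul (L / 2 * ‖v‖ ^ 2)
      simpa using this
    have := (h2.sub h3).sub h4
    exact this.congr_deriv (by ring)
  have hanti : AntitoneOn g (Set.Icc (0:ℝ) 1) := by
    apply antitoneOn_of_deriv_nonpos (convex_Icc 0 1)
    · exact fun t _ => (hgd t).continuousAt.continuousWithinAt
    · exact fun t _ => (hgd t).differentiableAt.differentiableWithinAt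
    · intro t ht
      rw [interior_Icc] at ht
      rw [(hgd t).deriv]
      have hb : ⟪f' (x + t • v) - f' x, v⟫ ≤ L * t * ‖v‖ ^ 2 := by
        calc ⟪f' (x + t • v) - f' x, v⟫ ≤ ‖f' (x + t • v) - f' x‖ * ‖v‖ :=
              real_inner_le_norm _ _
          _ ≤ (L * ‖(x + t • v) - x‖) * ‖v‖ := by
              apply mul_le_mul_of_nonneg_right (hlip _ _) (norm_nonneg _)
          _ = L * t * ‖v‖ ^ 2 := by
              rw [add_sub_cancel_left, norm_smul, Real.norm_eq_abs, abs_of_pos ht.1]; ring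
      rw [inner_sub_left] at hb
      linarith
  have := hanti (Set.left_mem_Icc.mpr zero_le_one) (Set.right_mem_Icc.mpr zero_le_one) zero_le_one
  simp only [hg, zero_smul, add_zero, zero_mul, one_smul, one_mul, sub_zero,
    one_pow, mul_one] at this
  have h0 : (0:ℝ) ^ 2 = 0 := by norm_num
  rw [h0, mul_zero, sub_zero] at this
  linarith

lemma my_nat_mul_tendsto {a : ℕ → ℝ} (h0 : ∀ n, 0 ≤ a n) (hmono : ∀ n, a (n + 1) ≤ a n)
    (hsum : Summable a) :
    Filter.Tendsto (fun n : ℕ => (n : ℝ) * a n) Filter.atTop (nhds 0) := by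
  have hanti : Antitone a := antitone_nat_of_succ_le hmono
  rw [Metric.tendsto_atTop]
  intro ε hε
  have htail : Filter.Tendsto (fun i : ℕ => ∑' k, a (k + i)) Filter.atTop (nhds 0) :=
    tendsto_sum_nat_add a
  obtain ⟨N, hN⟩ := (Metric.tendsto_atTop.mp htail) (ε / 2) (by linarith)
  have hNd := hN N le_rfl
  rw [Real.dist_eq, sub_zero] at hNd
  have htailN : ∑' k, a (k + N) < ε / 2 := lt_of_abs_lt hNd
  refine ⟨2 * N + 1, fun n hn => ?_⟩
  have hNn : N ≤ n := by omega
  rw [Real.dist_eq, sub_zero]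
  have hub : ((n - N : ℕ) : ℝ) * a n ≤ ∑' k, a (k + N) := by
    have hsum' : Summable fun k => a (k + N) := (summable_nat_add_iff N).mpr hsum
    calc ((n - N : ℕ) : ℝ) * a n = (Finset.Ico N n).card • a n := by
          rw [Nat.card_Ico, nsmul_eq_mul]
      _ ≤ ∑ i ∈ Finset.Ico N n, a i :=
          Finset.card_nsmul_le_sum _ _ _ (fun i hi => hanti (Finset.mem_Ico.mp hi).2.le)
      _ = ∑ i ∈ Finset.range (n - N), a (N + i) := Finset.sum_Ico_eq_sum_range _ _ _
      _ = ∑ i ∈ Finset.range (n - N), a (i + N) := by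
          apply Finset.sum_congr rfl; intro i _; rw [add_comm]
      _ ≤ ∑' k, a (k + N) := Summable.sum_le_tsum _ (fun i _ => h0 _) hsum'
  have hcast : ((n - N : ℕ) : ℝ) = (n : ℝ) - N := by
    rw [Nat.cast_sub hNn]
  have hle : (n : ℝ) ≤ 2 * ((n : ℝ) - N) := by
    have h2N : (2 * N : ℕ) ≤ n := by omega
    have h2N' : ((2 * N : ℕ) : ℝ) ≤ (n : ℕ) := Nat.cast_le.mpr h2N
    push_cast at h2N'
    linarith
  have han := h0 n
  have : (n : ℝ) * a n ≤ 2 * (((n : ℝ) - N) * a n) := by nlinarith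
  rw [abs_of_nonneg (by positivity)]
  rw [hcast] at hub
  calc (n : ℝ) * a n ≤ 2 * (((n : ℝ) - N) * a n) := this
    _ ≤ 2 * ∑' k, a (k + N) := by linarith
    _ < ε := by linarith

lemma my_strong_min {E : Type*} [NormedAddCommGroup E] [InnerProductSpace ℝ E]
    {ψ : E → ℝ} (hψconv : ConvexOn ℝ Set.univ ψ)
    (g : E) {Lbar : ℝ} (hLbar : 0 < Lbar) (xk dk : E)
    (hd : ∀ z : E, ⟪g, dk⟫ + Lbar / 2 * ‖dk‖ ^ 2 + ψ (xk + dk) ≤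
      ⟪g, z⟫ + Lbar / 2 * ‖z‖ ^ 2 + ψ (xk + z)) (z : E) :
    ⟪g, dk⟫ + Lbar / 2 * ‖dk‖ ^ 2 + ψ (xk + dk) + Lbar / 2 * ‖z - dk‖ ^ 2 ≤
      ⟪g, z⟫ + Lbar / 2 * ‖z‖ ^ 2 + ψ (xk + z) := by
  set Gd : ℝ := ⟪g, dk⟫ + Lbar / 2 * ‖dk‖ ^ 2 + ψ (xk + dk) with hGd
  set Gz : ℝ := ⟪g, z⟫ + Lbar / 2 * ‖z‖ ^ 2 + ψ (xk + z) with hGz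
  set C : ℝ := Lbar / 2 * ‖z - dk‖ ^ 2 with hC
  have key_t : ∀ t : ℝ, 0 < t → t ≤ 1 → Gd + (1 - t) * C ≤ Gz := by
    intro t ht ht1
    have h := hd (dk + t • (z - dk))
    have hinner : ⟪g, dk + t • (z - dk)⟫ = ⟪g, dk⟫ + t * (⟪g, z⟫ - ⟪g, dk⟫) := by
      rw [inner_add_right, real_inner_smul_right, inner_sub_right]
    have hn1 : ‖dk + t • (z - dk)‖ ^ 2
        = ‖dk‖ ^ 2 + 2 * (t * ⟪dk, z - dk⟫) + t ^ 2 * ‖z - dk‖ ^ 2 := by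
      rw [norm_add_sq_real, real_inner_smul_right, norm_smul, Real.norm_eq_abs,
        abs_of_pos ht]
      ring
    have hn2 : ‖z‖ ^ 2 = ‖dk‖ ^ 2 + 2 * ⟪dk, z - dk⟫ + ‖z - dk‖ ^ 2 := by
      conv_lhs => rw [show z = dk + (z - dk) by abel]
      rw [norm_add_sq_real]
    have hψ' : ψ (xk + (dk + t • (z - dk))) ≤ (1 - t) * ψ (xk + dk) + t * ψ (xk + z) := by
      have hpt : xk + (dk + t • (z - dk)) = (1 - t) • (xk + dk) + t • (xk + z) := by
        module
      rw [hpt]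
      exact hψconv.2 (Set.mem_univ _) (Set.mem_univ _) (by linarith) ht.le (by ring)
    rw [hinner, hn1] at h
    have hI : ⟪dk, z - dk⟫ = (‖z‖ ^ 2 - ‖dk‖ ^ 2 - ‖z - dk‖ ^ 2) / 2 := by linarith
    rw [hI] at h
    have hmul : t * (Gd + (1 - t) * C) ≤ t * Gz := by
      simp only [hGd, hGz, hC] at *
      nlinarith [h, hψ']
    exact le_of_mul_le_mul_left hmul ht
  have hseq : ∀ n : ℕ, Gd + (1 - 1 / ((n : ℝ) + 2)) * C ≤ Gz := by
    intro n
    refine key_t _ (by positivity) ?_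
    rw [div_le_one (by positivity)]
    have : (0:ℝ) ≤ (n:ℝ) := Nat.cast_nonneg n
    linarith
  have h1 : Filter.Tendsto (fun n : ℕ => 1 / ((n : ℝ) + 2)) Filter.atTop (nhds 0) := by
    have h2 : Filter.Tendsto (fun n : ℕ => (n : ℝ) + 2) Filter.atTop Filter.atTop :=
      Filter.tendsto_atTop_add_const_right _ 2 tendsto_natCast_atTop_atTop
    simpa [one_div, Pi.inv_def] using h2.inv_tendsto_atTop
  have hlim : Filter.Tendsto (fun n : ℕ => Gd + (1 - 1 / ((n : ℝ) + 2)) * C)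
      Filter.atTop (nhds (Gd + C)) := by
    have h2 : Filter.Tendsto (fun n : ℕ => (1:ℝ) - 1 / ((n : ℝ) + 2)) Filter.atTop
        (nhds (1 - 0)) := Filter.Tendsto.const_sub 1 h1
    have := (h2.mul_const C).const_add Gd
    simpa using this
  have := le_of_tendsto hlim (Filter.Eventually.of_forall hseq)
  linarith

/-- **Theorem 4 of the paper.** The proximal gradient method with
parameter `L̄ ≥ L` on `F = f + ψ` (with `f` convex `L`-smooth and `ψ` convex)
satisfies `F(x_k) − F* = o(1/k)`. -/
theorem proximal_gradient_o_one_div_k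
    {E : Type*} [NormedAddCommGroup E] [InnerProductSpace ℝ E]
    (f : E → ℝ) (f' : E → E) (ψ : E → ℝ) (L : ℝ) (hL : 0 < L)
    (hfconv : ConvexOn ℝ Set.univ f)
    (hderiv : ∀ y, HasFDerivAt f (innerSL ℝ (f' y)) y)
    (hlip : ∀ y z, ‖f' y - f' z‖ ≤ L * ‖y - z‖)
    (hψconv : ConvexOn ℝ Set.univ ψ)
    (F : E → ℝ) (hF : ∀ y, F y = f y + ψ y)
    (xstar : E) (hxstar : ∀ y, F xstar ≤ F y)
    (Lbar : ℝ) (hLbar : L ≤ Lbar)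
    (x : ℕ → E) (d : ℕ → E)
    (hd : ∀ k, ∀ z : E,
      ⟪f' (x k), d k⟫ + Lbar / 2 * ‖d k‖ ^ 2 + ψ (x k + d k) ≤
        ⟪f' (x k), z⟫ + Lbar / 2 * ‖z‖ ^ 2 + ψ (x k + z))
    (hx : ∀ k, x (k + 1) = x k + d k) :
    Filter.Tendsto (fun k : ℕ => (k : ℝ) * (F (x k) - F xstar))
      Filter.atTop (nhds 0) := by
  have hLbar0 : 0 < Lbar := hL.trans_le hLbar
  -- per-step key inequality
  have hkey : ∀ k, ∀ z : E,
      F (x (k + 1)) + Lbar / 2 * ‖z - x (k + 1)‖ ^ 2 ≤ F z + Lbar / 2 * ‖z - x k‖ ^ 2 := by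
    intro k z
    have hB : f (x k + d k) ≤ f (x k) + ⟪f' (x k), d k⟫ + Lbar / 2 * ‖d k‖ ^ 2 := by
      have h1 := my_descent hL hderiv hlip (x k) (d k)
      nlinarith [sq_nonneg ‖d k‖]
    have hS := my_strong_min hψconv (f' (x k)) hLbar0 (x k) (d k) (hd k) (z - x k)
    rw [add_sub_cancel] at hS
    have heq : (z - x k) - d k = z - x (k + 1) := by rw [hx k]; abel
    rw [heq] at hS
    have hA := my_conv_grad_ineq hfconv hderiv (x k) z
    rw [hx k] at hS
    rw [hF (x (k + 1)), hF z, hx k]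
    linarith
  have hnn : ∀ k, 0 ≤ F (x k) - F xstar := fun k => sub_nonneg.mpr (hxstar _)
  have hdec : ∀ k, F (x (k + 1)) - F xstar ≤ F (x k) - F xstar := by
    intro k
    have h := hkey k (x k)
    have h0 : ‖x k - x k‖ ^ 2 = 0 := by simp
    rw [h0] at h
    nlinarith [sq_nonneg ‖x k - x (k + 1)‖]
  have hsummable : Summable (fun k => F (x k) - F xstar) := by
    have hb : ∀ k, F (x (k + 1)) - F xstar ≤
        Lbar / 2 * ‖xstar - x k‖ ^ 2 - Lbar / 2 * ‖xstar - x (k + 1)‖ ^ 2 := by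
      intro k
      have h := hkey k xstar
      linarith
    have hpart : ∀ n, ∑ i ∈ Finset.range n, (F (x (i + 1)) - F xstar) ≤
        Lbar / 2 * ‖xstar - x 0‖ ^ 2 := by
      intro n
      have htel : ∑ i ∈ Finset.range n,
          (Lbar / 2 * ‖xstar - x i‖ ^ 2 - Lbar / 2 * ‖xstar - x (i + 1)‖ ^ 2)
          = Lbar / 2 * ‖xstar - x 0‖ ^ 2 - Lbar / 2 * ‖xstar - x n‖ ^ 2 :=
        Finset.sum_range_sub' (fun i => Lbar / 2 * ‖xstar - x i‖ ^ 2) n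
      have hsum_le := Finset.sum_le_sum (fun i (_ : i ∈ Finset.range n) => hb i)
      have hnn' : 0 ≤ Lbar / 2 * ‖xstar - x n‖ ^ 2 := by positivity
      calc ∑ i ∈ Finset.range n, (F (x (i + 1)) - F xstar)
          ≤ ∑ i ∈ Finset.range n,
            (Lbar / 2 * ‖xstar - x i‖ ^ 2 - Lbar / 2 * ‖xstar - x (i + 1)‖ ^ 2) := hsum_le
        _ = Lbar / 2 * ‖xstar - x 0‖ ^ 2 - Lbar / 2 * ‖xstar - x n‖ ^ 2 := htel
        _ ≤ Lbar / 2 * ‖xstar - x 0‖ ^ 2 := by linarith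
    have h1 : Summable (fun k => F (x (k + 1)) - F xstar) :=
      summable_of_sum_range_le (fun n => hnn (n + 1)) hpart
    exact (summable_nat_add_iff 1).mp h1
  exact my_nat_mul_tendsto hnn hdec hsummable
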